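/- arXiv:1602.03644 — 3 statements merged into one kernel-verified Lean document; each statement's English description precedes it below -/
import Mathlib

section
/- Alzer's inequality: for real m > 1 and z > 0, γ(m, z)/Γ(m) > (1 − exp(−c z))^m where c = (Γ(m+1))^{−1/m}. -/
open Real MeasureTheory Set Filter

lemma alzer_B_strictAnti : StrictAntiOn (fun x : ℝ => x⁻¹ - (Real.exp x - 1)⁻¹) (Set.Ioi 0) := by
  apply strictAntiOn_of_deriv_neg (convex_Ioi 0)
  · apply ContinuousOn.sub
    · exact continuousOn_id.inv₀ fun x hx => ne_of_gt hx
    · apply ContinuousOn.inv₀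
      · exact (Real.continuous_exp.sub continuous_const).continuousOn
      · intro x hx
        have : (1:ℝ) < Real.exp x := Real.one_lt_exp_iff.mpr hx
        linarith
  · intro x hx
    rw [interior_Ioi] at hx
    have hx0 : (0:ℝ) < x := hx
    have hex : (1:ℝ) < Real.exp x := Real.one_lt_exp_iff.mpr hx0
    have hexne : Real.exp x - 1 ≠ 0 := by linarith
    have hD : HasDerivAt (fun x : ℝ => x⁻¹ - (Real.exp x - 1)⁻¹)
        (-(x^2)⁻¹ - (-(Real.exp x) / (Real.exp x - 1)^2)) x := by
      exact (hasDerivAt_inv (ne_of_gt hx0)).sub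
        (((Real.hasDerivAt_exp x).sub_const 1).inv hexne)
    rw [hD.deriv]
    -- key inequality: exp x * x^2 < (exp x - 1)^2
    set u := Real.exp (x/2) with hu_def
    have hu1 : (1:ℝ) < u := Real.one_lt_exp_iff.mpr (by linarith)
    have huu : u * u = Real.exp x := by
      rw [hu_def, ← Real.exp_add]; ring_nf
    have hsinh : x/2 < Real.sinh (x/2) := Real.self_lt_sinh_iff.mpr (by linarith)
    have hsinh' : Real.sinh (x/2) = (u - u⁻¹)/2 := by
      rw [Real.sinh_eq, hu_def, Real.exp_neg]
    have hxu : x * u < u * u - 1 := by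
      have h1 : x < u - u⁻¹ := by rw [hsinh'] at hsinh; linarith
      have h2 : x * u < (u - u⁻¹) * u := by
        exact mul_lt_mul_of_pos_right h1 (by linarith)
      have h3 : (u - u⁻¹) * u = u * u - 1 := by
        field_simp
      linarith
    have hxu0 : 0 < x * u := mul_pos hx0 (by linarith)
    have hkey : Real.exp x * x^2 < (Real.exp x - 1)^2 := by
      have := mul_lt_mul'' hxu hxu (le_of_lt hxu0) (le_of_lt hxu0)
      calc Real.exp x * x^2 = (x*u)*(x*u) := by rw [← huu]; ring
        _ < (u*u-1)*(u*u-1) := this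
        _ = (Real.exp x - 1)^2 := by rw [← huu]; ring
    have h3 : Real.exp x / (Real.exp x - 1)^2 < (x^2)⁻¹ := by
      rw [inv_eq_one_div, div_lt_div_iff₀ (by positivity) (by positivity)]
      nlinarith
    have h4 : -(Real.exp x) / (Real.exp x - 1)^2 = -(Real.exp x / (Real.exp x - 1)^2) := by
      ring
    rw [h4]
    linarith

lemma alzer_hill {q : ℝ → ℝ} (hcc : StrictConcaveOn ℝ (Set.Ioi 0) q)
    (hl : Filter.Tendsto q (nhdsWithin 0 (Set.Ioi 0)) (nhds 0))
    {x1 x2 : ℝ} (h1 : 0 < x1) (h12 : x1 < x2) (hq1 : q x1 ≤ 0) : q x2 < 0 := by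
  by_contra hcon
  push_neg at hcon
  have hx2 : 0 < x2 := h1.trans h12
  have step : ∀ y, 0 < y → y < x2 → (y / x2) * q x2 ≤ q y := by
    intro y hy hyx2
    have ev : ∀ᶠ ε in nhdsWithin 0 (Set.Ioi 0),
        ((x2 - y)/(x2 - ε)) * q ε + ((y - ε)/(x2 - ε)) * q x2 ≤ q y := by
      filter_upwards [Ioo_mem_nhdsGT_of_mem (Set.left_mem_Ico.mpr hy)] with ε hε
      have hε0 : 0 < ε := hε.1
      have hεy : ε < y := hε.2
      have hden : 0 < x2 - ε := by linarith
      have ha : (0:ℝ) ≤ (x2 - y)/(x2 - ε) := by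
        apply div_nonneg <;> linarith
      have hb : (0:ℝ) ≤ (y - ε)/(x2 - ε) := by
        apply div_nonneg <;> linarith
      have hab : (x2 - y)/(x2 - ε) + (y - ε)/(x2 - ε) = 1 := by
        field_simp
        ring
      have hcombo : ((x2 - y)/(x2 - ε)) * ε + ((y - ε)/(x2 - ε)) * x2 = y := by
        field_simp; ring
      have := hcc.concaveOn.2 (Set.mem_Ioi.mpr hε0) (Set.mem_Ioi.mpr hx2) ha hb hab
      rw [smul_eq_mul, smul_eq_mul, smul_eq_mul, smul_eq_mul, hcombo] at this
      exact this
    have tend : Filter.Tendsto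
        (fun ε => ((x2 - y)/(x2 - ε)) * q ε + ((y - ε)/(x2 - ε)) * q x2)
        (nhdsWithin 0 (Set.Ioi 0)) (nhds (((x2 - y)/x2) * 0 + (y/x2) * q x2)) := by
      apply Filter.Tendsto.add
      · apply Filter.Tendsto.mul _ hl
        have : ContinuousAt (fun ε : ℝ => (x2 - y)/(x2 - ε)) 0 :=
          ContinuousAt.div continuousAt_const (continuousAt_const.sub continuousAt_id)
            (by simpa using ne_of_gt hx2)
        simpa using this.continuousWithinAt.tendsto
      · apply Filter.Tendsto.mul _ tendsto_const_nhds
        have : ContinuousAt (fun ε : ℝ => (y - ε)/(x2 - ε)) 0 :=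
          ContinuousAt.div (continuousAt_const.sub continuousAt_id)
            (continuousAt_const.sub continuousAt_id) (by simpa using ne_of_gt hx2)
        simpa using this.continuousWithinAt.tendsto
    have := le_of_tendsto tend ev
    linarith
  -- now derive contradiction
  have hw : 0 ≤ q (x1/2) := by
    have := step (x1/2) (by linarith) (by linarith)
    have hnn : 0 ≤ (x1/2 / x2) * q x2 :=
      mul_nonneg (div_nonneg (by linarith) (by linarith)) hcon
    linarith
  -- x1 is a strict convex combination of x1/2 and x2
  have hden : 0 < x2 - x1/2 := by linarith
  have ha : (0:ℝ) < (x2 - x1)/(x2 - x1/2) := by apply div_pos <;> linarith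
  have hb : (0:ℝ) < (x1 - x1/2)/(x2 - x1/2) := by apply div_pos <;> linarith
  have hab : (x2 - x1)/(x2 - x1/2) + (x1 - x1/2)/(x2 - x1/2) = 1 := by
    rw [← add_div, div_eq_one_iff_eq (ne_of_gt hden)]; ring
  have hcombo : ((x2 - x1)/(x2 - x1/2)) * (x1/2) + ((x1 - x1/2)/(x2 - x1/2)) * x2 = x1 := by
    rw [div_mul_eq_mul_div, div_mul_eq_mul_div, ← add_div, div_eq_iff (ne_of_gt hden)]; ring
  have hne : x1/2 ≠ x2 := by linarith
  have hstrict := hcc.2 (Set.mem_Ioi.mpr (by linarith : (0:ℝ) < x1/2))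
    (Set.mem_Ioi.mpr hx2) hne ha hb hab
  rw [smul_eq_mul, smul_eq_mul, smul_eq_mul, smul_eq_mul, hcombo] at hstrict
  have : 0 ≤ ((x2 - x1)/(x2 - x1/2)) * q (x1/2) + ((x1 - x1/2)/(x2 - x1/2)) * q x2 :=
    add_nonneg (mul_nonneg ha.le hw) (mul_nonneg hb.le hcon)
  linarith

/-- Alzer's inequality: for real `m > 1` and `z > 0`,
`γ(m, z)/Γ(m) > (1 − exp(−c z))^m` with `c = (Γ(m+1))^{−1/m}`. -/
theorem alzer_inequality (m z : ℝ) (hm : 1 < m) (hz : 0 < z) :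
    (∫ t in (0:ℝ)..z, t ^ (m - 1) * Real.exp (-t)) / Real.Gamma m >
      (1 - Real.exp (-(Real.Gamma (m + 1)) ^ (-(1 / m)) * z)) ^ m := by
  have hm0 : (0:ℝ) < m := by linarith
  have hm1 : (1:ℝ) ≤ m := hm.le
  have hΓm : 0 < Real.Gamma m := Real.Gamma_pos_of_pos hm0
  have hΓm1 : 0 < Real.Gamma (m + 1) := Real.Gamma_pos_of_pos (by linarith)
  set c : ℝ := (Real.Gamma (m + 1)) ^ (-(1 / m)) with hc_def
  have hc : 0 < c := Real.rpow_pos_of_pos hΓm1 _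
  rw [neg_mul]
  set k : ℝ := (1 - c)/c with hk_def
  set q : ℝ → ℝ := fun x => (m-1) * (Real.log x - Real.log (1 - Real.exp (-x))) - k * x
    with hq_def
  set f : ℝ → ℝ := fun t => t ^ (m-1) * Real.exp (-t) with hf_def
  set g' : ℝ → ℝ := fun t => c * Real.exp (-(c*t)) * m * (1 - Real.exp (-(c*t))) ^ (m-1)
    with hg'_def
  set G : ℝ → ℝ := fun t => (1 - Real.exp (-(c*t))) ^ m with hG_def
  -- positivity of 1 - exp(-x)
  have hpos1 : ∀ x : ℝ, 0 < x → 0 < 1 - Real.exp (-x) := by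
    intro x hx
    have : Real.exp (-x) < 1 := Real.exp_lt_one_iff.mpr (by linarith)
    linarith
  -- log identities
  have hlogc : Real.log (Real.Gamma (m+1)) = -(m * Real.log c) := by
    have h1 : Real.log c = -(1/m) * Real.log (Real.Gamma (m+1)) := by
      rw [hc_def, Real.log_rpow hΓm1]
    have h2 : m * Real.log c = -Real.log (Real.Gamma (m+1)) := by
      rw [h1]; field_simp
    linarith
  have hlogm : Real.log (Real.Gamma (m+1)) = Real.log m + Real.log (Real.Gamma m) := by
    rw [Real.Gamma_add_one (ne_of_gt hm0), Real.log_mul (ne_of_gt hm0) (ne_of_gt hΓm)]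
  -- the fundamental sign identity
  have hsign : ∀ t : ℝ, 0 < t →
      Real.log (f t / Real.Gamma m) - Real.log (g' t) = q (c*t) := by
    intro t ht
    have hct : 0 < c * t := mul_pos hc ht
    have hb : 0 < 1 - Real.exp (-(c*t)) := hpos1 _ hct
    have htm : (0:ℝ) < t ^ (m-1) := Real.rpow_pos_of_pos ht _
    have hbm : (0:ℝ) < (1 - Real.exp (-(c*t))) ^ (m-1) := Real.rpow_pos_of_pos hb _
    have hk2 : k * (c*t) = (1-c)*t := by
      rw [hk_def]; field_simp
    simp only [hq_def, hg'_def, hf_def]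
    rw [Real.log_div (by positivity) (ne_of_gt hΓm),
        Real.log_mul (ne_of_gt htm) (Real.exp_ne_zero _),
        Real.log_rpow ht, Real.log_exp,
        Real.log_mul (by positivity) (ne_of_gt hbm),
        Real.log_mul (by positivity) (ne_of_gt hm0),
        Real.log_mul (ne_of_gt hc) (Real.exp_ne_zero _),
        Real.log_exp, Real.log_rpow hb, Real.log_mul (ne_of_gt hc) (ne_of_gt ht), hk2]
    linear_combination hlogm - hlogc
  -- derivative of the inner function
  have hinner : ∀ x : ℝ, HasDerivAt (fun y : ℝ => 1 - Real.exp (-y)) (Real.exp (-x)) x := by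
    intro x
    have h := ((Real.hasDerivAt_exp (-x)).comp x (hasDerivAt_neg x)).const_sub 1
    simpa using h
  -- derivative of q
  have hq_deriv : ∀ x : ℝ, 0 < x →
      HasDerivAt q ((m-1) * (x⁻¹ - (Real.exp x - 1)⁻¹) - k) x := by
    intro x hx
    have hbx : 0 < 1 - Real.exp (-x) := hpos1 x hx
    have hlog2 : HasDerivAt (fun y : ℝ => Real.log (1 - Real.exp (-y)))
        (Real.exp (-x) / (1 - Real.exp (-x))) x := (hinner x).log (ne_of_gt hbx)
    have h1 : HasDerivAt q ((m-1) * (x⁻¹ - Real.exp (-x) / (1 - Real.exp (-x))) - k * 1) x :=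
      (((Real.hasDerivAt_log (ne_of_gt hx)).sub hlog2).const_mul (m-1)).sub
        ((hasDerivAt_id x).const_mul k)
    convert h1 using 1
    have hex : Real.exp x ≠ 0 := Real.exp_ne_zero x
    have hgt : (1:ℝ) < Real.exp x := Real.one_lt_exp_iff.mpr hx
    have h5 : Real.exp x - 1 ≠ 0 := by linarith
    have hbx' : 1 - (Real.exp x)⁻¹ ≠ 0 := by
      rw [← Real.exp_neg]; exact ne_of_gt hbx
    have h2 : Real.exp (-x) / (1 - Real.exp (-x)) = (Real.exp x - 1)⁻¹ := by
      rw [Real.exp_neg]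
      rw [div_eq_iff hbx', inv_mul_eq_div, eq_div_iff h5]
      field_simp
    rw [h2]; ring
  have hq_cont : ContinuousOn q (Set.Ioi 0) := fun x hx =>
    ((hq_deriv x hx).differentiableAt.continuousAt).continuousWithinAt
  have hq_anti : StrictAntiOn (deriv q) (interior (Set.Ioi 0)) := by
    rw [interior_Ioi]
    intro x hx y hy hxy
    rw [(hq_deriv x hx).deriv, (hq_deriv y hy).deriv]
    have hBA := alzer_B_strictAnti hx hy hxy
    simp only at hBA
    have hm1' : (0:ℝ) < m - 1 := by linarith
    nlinarith [mul_lt_mul_of_pos_left hBA hm1']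
  have hconc : StrictConcaveOn ℝ (Set.Ioi 0) q :=
    StrictAntiOn.strictConcaveOn_of_deriv (convex_Ioi 0) hq_cont hq_anti
  -- limit of q at 0+
  have hq_lim : Filter.Tendsto q (nhdsWithin 0 (Set.Ioi 0)) (nhds 0) := by
    have hd : HasDerivAt (fun x : ℝ => 1 - Real.exp (-x)) 1 0 := by
      have := hinner 0
      simpa using this
    have hslope : Filter.Tendsto (fun x : ℝ => (1 - Real.exp (-x)) / x)
        (nhdsWithin 0 (Set.Ioi 0)) (nhds 1) := by
      have h := hasDerivAt_iff_tendsto_slope.mp hd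
      have h2 := h.mono_left (nhdsWithin_mono 0 (fun x hx => ne_of_gt hx))
      refine h2.congr fun x => ?_
      rw [slope_def_field]
      simp
    have hratio : Filter.Tendsto (fun x : ℝ => x / (1 - Real.exp (-x)))
        (nhdsWithin 0 (Set.Ioi 0)) (nhds 1) := by
      have h := hslope.inv₀ one_ne_zero
      rw [inv_one] at h
      refine h.congr fun x => ?_
      rw [inv_div]
    have hlog : Filter.Tendsto (fun x : ℝ => Real.log x - Real.log (1 - Real.exp (-x)))
        (nhdsWithin 0 (Set.Ioi 0)) (nhds 0) := by
      have h := (Real.continuousAt_log one_ne_zero).tendsto.comp hratio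
      rw [Real.log_one] at h
      refine Filter.Tendsto.congr' ?_ h
      filter_upwards [self_mem_nhdsWithin] with x hx
      have hx0 : (0:ℝ) < x := hx
      rw [Function.comp_apply, Real.log_div (ne_of_gt hx0) (ne_of_gt (hpos1 x hx0))]
    have hklim : Filter.Tendsto (fun x : ℝ => k * x) (nhdsWithin 0 (Set.Ioi 0)) (nhds 0) := by
      have h : ContinuousAt (fun x : ℝ => k * x) 0 := continuousAt_const.mul continuousAt_id
      have h2 := h.continuousWithinAt (s := Set.Ioi 0)
      simpa using h2.tendsto
    have h := (hlog.const_mul (m-1)).sub hklim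
    rw [hq_def]
    simpa using h
  -- derivative of G
  have hG_deriv : ∀ t : ℝ, HasDerivAt G (g' t) t := by
    intro t
    have h1 : HasDerivAt (fun y : ℝ => -(c*y)) (-c) t := by
      simpa using ((hasDerivAt_id t).const_mul c).fun_neg
    have h2 : HasDerivAt (fun y : ℝ => 1 - Real.exp (-(c*y))) (c * Real.exp (-(c*t))) t := by
      have h := ((Real.hasDerivAt_exp (-(c*t))).comp t h1).const_sub 1
      rw [show c * Real.exp (-(c*t)) = -(Real.exp (-(c*t)) * -c) by ring]
      exact h
    have h3 := h2.rpow_const (p := m) (Or.inr hm1)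
    rw [hG_def, hg'_def]
    exact h3
  -- continuity
  have hf_cont : Continuous f := by
    rw [hf_def]
    apply Continuous.mul _ (Real.continuous_exp.comp continuous_neg)
    rw [continuous_iff_continuousAt]
    intro t
    exact Real.continuousAt_rpow_const t (m-1) (Or.inr (by linarith))
  have hb_cont : Continuous fun t : ℝ => 1 - Real.exp (-(c*t)) :=
    continuous_const.sub (Real.continuous_exp.comp (continuous_const.mul continuous_id).neg)
  have hg'_cont : Continuous g' := by
    rw [hg'_def]
    apply Continuous.mul
    · exact (continuous_const.mul
        (Real.continuous_exp.comp (continuous_const.mul continuous_id).neg)).mul continuous_const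
    · rw [continuous_iff_continuousAt]
      intro t
      exact (Real.continuousAt_rpow_const _ (m-1) (Or.inr (by linarith))).comp
        hb_cont.continuousAt
  -- Gamma integral facts
  have hf_eq : (fun t : ℝ => Real.exp (-t) * t ^ (m-1)) = f := by
    funext t; rw [hf_def]; ring
  have hf_int : MeasureTheory.IntegrableOn f (Set.Ioi 0) := by
    rw [← hf_eq]; exact Real.GammaIntegral_convergent hm0
  have hΓ_eq : ∫ t in Set.Ioi 0, f t = Real.Gamma m := by
    rw [Real.Gamma_eq_integral hm0, hf_eq]
  have hsplit : ∫ t in Set.Ioi 0, f t = (∫ t in Set.Ioc 0 z, f t) + ∫ t in Set.Ioi z, f t := by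
    rw [← Set.Ioc_union_Ioi_eq_Ioi hz.le]
    exact MeasureTheory.setIntegral_union (Set.Ioc_disjoint_Ioi le_rfl) measurableSet_Ioi
      (hf_int.mono_set Set.Ioc_subset_Ioi_self) (hf_int.mono_set (Set.Ioi_subset_Ioi hz.le))
  -- FTC for G on [0, z]
  have hG_FTC : ∫ t in (0:ℝ)..z, g' t = G z := by
    have h := intervalIntegral.integral_eq_sub_of_hasDerivAt (f := G) (f' := g')
      (fun t _ => hG_deriv t) (hg'_cont.intervalIntegrable 0 z)
    rw [h, hG_def]
    norm_num [Real.zero_rpow hm0.ne']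
  -- limit of G at infinity
  have hGtop : Filter.Tendsto G Filter.atTop (nhds 1) := by
    have hct : Filter.Tendsto (fun t : ℝ => c*t) Filter.atTop Filter.atTop :=
      Filter.Tendsto.const_mul_atTop hc Filter.tendsto_id
    have hexp : Filter.Tendsto (fun t : ℝ => Real.exp (-(c*t))) Filter.atTop (nhds 0) :=
      Real.tendsto_exp_atBot.comp (Filter.tendsto_neg_atTop_atBot.comp hct)
    have hbase : Filter.Tendsto (fun t : ℝ => 1 - Real.exp (-(c*t))) Filter.atTop (nhds 1) := by
      have h0 := hexp.const_sub 1
      simpa using h0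
    have h := (Real.continuousAt_rpow_const 1 m (Or.inl one_ne_zero)).tendsto.comp hbase
    rw [Real.one_rpow] at h
    rw [hG_def]
    exact h
  -- nonnegativity of g'
  have hg'_nonneg : ∀ t : ℝ, 0 ≤ t → 0 ≤ g' t := by
    intro t ht
    have hb : 0 ≤ 1 - Real.exp (-(c*t)) := by
      have h1 : Real.exp (-(c*t)) ≤ 1 := by
        rw [← Real.exp_zero]
        apply Real.exp_le_exp.mpr
        have := mul_nonneg hc.le ht
        linarith
      linarith
    rw [hg'_def]
    apply mul_nonneg
    · apply mul_nonneg (mul_nonneg hc.le (Real.exp_pos _).le) hm0.le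
    · exact Real.rpow_nonneg hb _
  have htail_g : ∫ t in Set.Ioi z, g' t = 1 - G z :=
    MeasureTheory.integral_Ioi_of_hasDerivAt_of_nonneg' (fun t _ => hG_deriv t)
      (fun t ht => hg'_nonneg t (hz.trans ht).le) hGtop
  have hg'z_int : MeasureTheory.IntegrableOn g' (Set.Ioi z) :=
    MeasureTheory.integrableOn_Ioi_deriv_of_nonneg' (fun t _ => hG_deriv t)
      (fun t ht => hg'_nonneg t (hz.trans ht).le) hGtop
  -- sign bridges
  have hfp : ∀ t : ℝ, 0 < t → 0 < f t / Real.Gamma m := by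
    intro t ht
    rw [hf_def]
    have := Real.rpow_pos_of_pos ht (m-1)
    positivity
  have hgp : ∀ t : ℝ, 0 < t → 0 < g' t := by
    intro t ht
    have hb := hpos1 (c*t) (mul_pos hc ht)
    have := Real.rpow_pos_of_pos hb (m-1)
    rw [hg'_def]
    positivity
  have hlt_of_qneg : ∀ t : ℝ, 0 < t → q (c*t) < 0 → f t < Real.Gamma m * g' t := by
    intro t ht hq
    have h := hsign t ht
    have h4 : Real.log (f t / Real.Gamma m) - Real.log (g' t) < 0 := by rw [h]; exact hq
    have h3 := (Real.log_lt_log_iff (hfp t ht) (hgp t ht)).mp (sub_neg.mp h4)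
    rw [div_lt_iff₀ hΓm] at h3
    linarith [h3, mul_comm (g' t) (Real.Gamma m)]
  have hgt_of_qpos : ∀ t : ℝ, 0 < t → 0 < q (c*t) → g' t < f t / Real.Gamma m := by
    intro t ht hq
    have h := hsign t ht
    have h4 : 0 < Real.log (f t / Real.Gamma m) - Real.log (g' t) := by rw [h]; exact hq
    exact (Real.log_lt_log_iff (hgp t ht) (hfp t ht)).mp (sub_pos.mp h4)
  -- main case split
  by_cases hA : ∀ t ∈ Set.Ioo 0 z, 0 < q (c*t)
  · -- integrand positive on (0, z)
    have hpos : 0 < ∫ t in (0:ℝ)..z, (f t / Real.Gamma m - g' t) := by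
      apply intervalIntegral.intervalIntegral_pos_of_pos_on
      · exact ((hf_cont.div_const _).sub hg'_cont).intervalIntegrable 0 z
      · intro t ht
        have h := hgt_of_qpos t ht.1 (hA t ht)
        linarith
      · exact hz
    rw [intervalIntegral.integral_sub ((hf_cont.div_const _).intervalIntegrable 0 z)
        (hg'_cont.intervalIntegrable 0 z)] at hpos
    have hdiv : ∫ t in (0:ℝ)..z, f t / Real.Gamma m
        = (∫ t in (0:ℝ)..z, f t) / Real.Gamma m := intervalIntegral.integral_div _ _
    rw [hdiv, hG_FTC] at hpos
    simp only [hG_def] at hpos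
    linarith
  · push_neg at hA
    obtain ⟨t1, ht1, hq1⟩ := hA
    have hneg : ∀ t : ℝ, z ≤ t → f t < Real.Gamma m * g' t := by
      intro t ht
      have h0t : 0 < t := lt_of_lt_of_le hz ht
      apply hlt_of_qneg t h0t
      apply alzer_hill hconc hq_lim (mul_pos hc ht1.1) _ hq1
      exact mul_lt_mul_of_pos_left (lt_of_lt_of_le ht1.2 ht) hc
    have hfz_int : MeasureTheory.IntegrableOn f (Set.Ioi z) :=
      hf_int.mono_set (Set.Ioi_subset_Ioi hz.le)
    have hdiff_int : MeasureTheory.IntegrableOn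
        (fun t => Real.Gamma m * g' t - f t) (Set.Ioi z) :=
      (hg'z_int.const_mul _).sub hfz_int
    have hpos_tail : 0 < ∫ t in Set.Ioi z, (Real.Gamma m * g' t - f t) := by
      have hsplit2 : ∫ t in Set.Ioi z, (Real.Gamma m * g' t - f t)
          = (∫ t in Set.Ioc z (z+1), (Real.Gamma m * g' t - f t))
            + ∫ t in Set.Ioi (z+1), (Real.Gamma m * g' t - f t) := by
        rw [← Set.Ioc_union_Ioi_eq_Ioi (by linarith : z ≤ z+1)]
        exact MeasureTheory.setIntegral_union (Set.Ioc_disjoint_Ioi le_rfl) measurableSet_Ioi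
          (hdiff_int.mono_set Set.Ioc_subset_Ioi_self)
          (hdiff_int.mono_set (Set.Ioi_subset_Ioi (by linarith)))
      have h1 : 0 < ∫ t in Set.Ioc z (z+1), (Real.Gamma m * g' t - f t) := by
        rw [← intervalIntegral.integral_of_le (by linarith : z ≤ z+1)]
        apply intervalIntegral.intervalIntegral_pos_of_pos_on
        · exact ((continuous_const.mul hg'_cont).sub hf_cont).intervalIntegrable z (z+1)
        · intro t ht
          have := hneg t ht.1.le
          linarith
        · linarith
      have h2 : 0 ≤ ∫ t in Set.Ioi (z+1), (Real.Gamma m * g' t - f t) := by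
        apply MeasureTheory.setIntegral_nonneg measurableSet_Ioi
        intro t ht
        have := hneg t (by linarith [Set.mem_Ioi.mp ht])
        linarith
      rw [hsplit2]
      linarith
    rw [MeasureTheory.integral_sub (hg'z_int.const_mul _) hfz_int,
        MeasureTheory.integral_const_mul, htail_g] at hpos_tail
    have htailf : ∫ t in Set.Ioi z, f t = Real.Gamma m - ∫ t in (0:ℝ)..z, f t := by
      rw [intervalIntegral.integral_of_le hz.le]
      linarith [hsplit, hΓ_eq]
    rw [htailf] at hpos_tail
    rw [gt_iff_lt, lt_div_iff₀ hΓm]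
    simp only [hG_def] at hpos_tail
    nlinarith [hpos_tail]
end

section
/- For a Gamma(m, m)-distributed fading gain h (integer m ≥ 1) and nonnegative random variable I independent of h, P(h > z I) = Σ_{k=0}^{m-1} ((−s)^k / k!) · (d^k/ds^k) L_I(s) evaluated at s = m z, where L_I(s) = E[e^{-sI}]. -/
open Real MeasureTheory Finset ProbabilityTheory

lemma pow_mul_exp_neg_le {c : ℝ} (hc : 0 < c) (n : ℕ) {t : ℝ} (ht : 0 ≤ t) :
    t ^ n * Real.exp (-(c * t)) ≤ (Nat.factorial n) / c ^ n := by
  have h1 : (c * t) ^ n / (Nat.factorial n) ≤ Real.exp (c * t) := by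
    calc (c*t)^n / (Nat.factorial n) ≤ ∑ i ∈ range (n+1), (c*t)^i / (Nat.factorial i) := by
          apply Finset.single_le_sum (f := fun i => (c*t)^i / (Nat.factorial i))
          · intro i _
            positivity
          · simp
      _ ≤ Real.exp (c*t) := Real.sum_le_exp_of_nonneg (by positivity) _
  have h2 : (c*t)^n ≤ (Nat.factorial n) * Real.exp (c*t) := by
    rw [div_le_iff₀ (by positivity)] at h1
    linarith [h1]
  have h3 : t ^ n ≤ (Nat.factorial n) / c^n * Real.exp (c*t) := by
    rw [mul_pow] at h2
    rw [div_mul_eq_mul_div, le_div_iff₀ (by positivity)]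
    nlinarith [h2]
  calc t^n * Real.exp (-(c*t)) ≤ ((Nat.factorial n) / c^n * Real.exp (c*t)) * Real.exp (-(c*t)) :=
        mul_le_mul_of_nonneg_right h3 (Real.exp_pos _).le
    _ = (Nat.factorial n) / c^n := by
        rw [mul_assoc, ← Real.exp_add]; simp

section aux
variable {Ω : Type*} [MeasurableSpace Ω] (μ : Measure Ω) [IsProbabilityMeasure μ]
  (I : Ω → ℝ) (hI : Measurable I) (hI0 : ∀ ω, 0 ≤ I ω)
include hI hI0

lemma intg (n : ℕ) {s : ℝ} (hs : 0 < s) :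
    Integrable (fun ω => (-I ω) ^ n * Real.exp (-s * I ω)) μ := by
  apply Integrable.mono' (integrable_const ((Nat.factorial n / s ^ n : ℝ)))
  · exact ((hI.neg.pow measurable_const).mul
      ((hI.const_mul (-s)).exp)).aestronglyMeasurable
  · filter_upwards with ω
    have h0 := hI0 ω
    rw [Real.norm_eq_abs, abs_mul, abs_pow, abs_neg, abs_of_nonneg h0,
      Real.abs_exp]
    have : -s * I ω = -(s * I ω) := by ring
    rw [this]
    exact pow_mul_exp_neg_le hs n h0

lemma derivF (n : ℕ) {s : ℝ} (hs : 0 < s) :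
    HasDerivAt (fun x : ℝ => ∫ ω, (-I ω) ^ n * Real.exp (-x * I ω) ∂μ)
      (∫ ω, (-I ω) ^ (n+1) * Real.exp (-s * I ω) ∂μ) s := by
  have hε : (0:ℝ) < s/2 := by linarith
  have key := hasDerivAt_integral_of_dominated_loc_of_deriv_le (μ := μ)
    (F := fun x ω => (-I ω) ^ n * Real.exp (-x * I ω))
    (F' := fun x ω => (-I ω) ^ (n+1) * Real.exp (-x * I ω))
    (bound := fun _ => (Nat.factorial (n+1) : ℝ) / (s/2) ^ (n+1))
    (Metric.ball_mem_nhds s hε)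
    (Filter.Eventually.of_forall fun x =>
      (((hI.neg.pow measurable_const).mul ((hI.const_mul (-x)).exp)).aestronglyMeasurable))
    (intg μ I hI hI0 n hs)
    (((hI.neg.pow measurable_const).mul ((hI.const_mul (-s)).exp)).aestronglyMeasurable)
    ?_ (integrable_const _) ?_
  · exact key.2
  · filter_upwards with ω x hx
    have h0 := hI0 ω
    rw [Metric.mem_ball, Real.dist_eq, abs_lt] at hx
    have hxs : s/2 ≤ x := by linarith [hx.1]
    rw [Real.norm_eq_abs, abs_mul, abs_pow, abs_neg, abs_of_nonneg h0, Real.abs_exp]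
    calc I ω ^ (n+1) * Real.exp (-x * I ω)
        ≤ I ω ^ (n+1) * Real.exp (-(s/2) * I ω) := by
          apply mul_le_mul_of_nonneg_left _ (by positivity)
          apply Real.exp_le_exp.2
          nlinarith
      _ ≤ (Nat.factorial (n+1) : ℝ) / (s/2) ^ (n+1) := by
          have : -(s/2) * I ω = -((s/2) * I ω) := by ring
          rw [this]
          exact pow_mul_exp_neg_le hε (n+1) h0
  · filter_upwards with ω x hx
    have : HasDerivAt (fun x : ℝ => Real.exp (-x * I ω)) (-I ω * Real.exp (-x * I ω)) x := by
      have h1 : HasDerivAt (fun x : ℝ => -x * I ω) (-I ω) x := by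
        simpa using (hasDerivAt_id x).neg.mul_const (I ω)
      have := h1.exp
      convert this using 1; ring
    have h2 := this.const_mul ((-I ω) ^ n)
    convert h2 using 1
    · rfl
    ring

lemma iterDeriv (k : ℕ) {s : ℝ} (hs : 0 < s) :
    iteratedDeriv k (fun s : ℝ => ∫ ω, Real.exp (-s * I ω) ∂μ) s =
      ∫ ω, (-I ω) ^ k * Real.exp (-s * I ω) ∂μ := by
  induction k generalizing s with
  | zero => simp
  | succ n ih =>
    rw [iteratedDeriv_succ]
    have heq : (iteratedDeriv n (fun s : ℝ => ∫ ω, Real.exp (-s * I ω) ∂μ))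
        =ᶠ[nhds s] (fun x : ℝ => ∫ ω, (-I ω) ^ n * Real.exp (-x * I ω) ∂μ) := by
      filter_upwards [Ioi_mem_nhds hs] with x hx
      exact ih hx
    rw [heq.deriv_eq]
    exact (derivF μ I hI hI0 n hs).deriv

end aux

theorem coverage_lhs {Ω : Type*} [MeasurableSpace Ω] (μ : Measure Ω)
    [IsProbabilityMeasure μ] (h I : Ω → ℝ) (hh : Measurable h) (hI : Measurable I)
    (hI0 : ∀ ω, 0 ≤ I ω) (hindep : IndepFun h I μ) (m : ℕ)
    (hccdf : ∀ x : ℝ, 0 ≤ x → (μ {ω | h ω > x}).toReal =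
      Real.exp (-(m * x)) * ∑ k ∈ Finset.range m, (m * x) ^ k / (Nat.factorial k))
    (z : ℝ) (hz : 0 < z) :
    (μ {ω | h ω > z * I ω}).toReal =
      ∫ ω, Real.exp (-((m:ℝ) * (z * I ω))) *
        ∑ k ∈ Finset.range m, ((m:ℝ) * (z * I ω)) ^ k / (Nat.factorial k) ∂μ := by
  set G : ℝ → ℝ := fun b => Real.exp (-((m:ℝ) * (z * b))) *
        ∑ k ∈ Finset.range m, ((m:ℝ) * (z * b)) ^ k / (Nat.factorial k) with hG
  have hmap : μ.map (fun ω => (I ω, h ω)) = (μ.map I).prod (μ.map h) :=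
    (indepFun_iff_map_prod_eq_prod_map_map hI.aemeasurable hh.aemeasurable).mp hindep.symm
  have hS : MeasurableSet {p : ℝ × ℝ | z * p.1 < p.2} :=
    measurableSet_lt (measurable_fst.const_mul z) measurable_snd
  have step1 : μ {ω | h ω > z * I ω} =
      ((μ.map I).prod (μ.map h)) {p : ℝ × ℝ | z * p.1 < p.2} := by
    rw [← hmap, Measure.map_apply (hI.prodMk hh) hS]
    rfl
  have step2 : ((μ.map I).prod (μ.map h)) {p : ℝ × ℝ | z * p.1 < p.2} =
      ∫⁻ b, (μ.map h) (Set.Ioi (z * b)) ∂(μ.map I) := by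
    rw [Measure.prod_apply hS]
    rfl
  have hanti : Antitone (fun b => (μ.map h) (Set.Ioi (z * b))) := by
    intro b1 b2 hb
    exact measure_mono (Set.Ioi_subset_Ioi (by nlinarith))
  have hmeas := hanti.measurable
  have hfin : ∀ᵐ b ∂(μ.map I), (μ.map h) (Set.Ioi (z * b)) < ⊤ :=
    Filter.Eventually.of_forall fun b => measure_lt_top _ _
  have step3 : (∫⁻ b, (μ.map h) (Set.Ioi (z * b)) ∂(μ.map I)).toReal =
      ∫ b, ((μ.map h) (Set.Ioi (z * b))).toReal ∂(μ.map I) :=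
    (integral_toReal hmeas.aemeasurable hfin).symm
  have hae : ∀ᵐ b ∂(μ.map I), 0 ≤ b := by
    rw [ae_map_iff hI.aemeasurable (measurableSet_Ici : MeasurableSet (Set.Ici (0:ℝ)))]
    exact Filter.Eventually.of_forall hI0
  have step4 : ∫ b, ((μ.map h) (Set.Ioi (z * b))).toReal ∂(μ.map I) = ∫ b, G b ∂(μ.map I) := by
    apply integral_congr_ae
    filter_upwards [hae] with b hb
    have hx : 0 ≤ z * b := by positivity
    have : (μ.map h) (Set.Ioi (z * b)) = μ {ω | h ω > z * b} := by
      rw [Measure.map_apply hh measurableSet_Ioi]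
      rfl
    rw [this, hccdf _ hx, hG]
  have hGcont : Continuous G := by
    apply Continuous.mul
    · exact (continuous_const.mul (continuous_const.mul continuous_id)).neg.rexp
    · exact continuous_finset_sum _ fun k _ => by continuity
  have step5 : ∫ b, G b ∂(μ.map I) = ∫ ω, G (I ω) ∂μ :=
    integral_map hI.aemeasurable hGcont.aestronglyMeasurable
  rw [step1, step2, step3, step4, step5]

/-- For a `Gamma(m, m)`-distributed fading gain `h` (integer `m ≥ 1`, so
`P(h > x) = e^{-mx} ∑_{k<m} (mx)^k/k!` for `x ≥ 0`) independent of a nonnegative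
random variable `I`, and `z > 0`:
`P(h > z I) = [∑_{k<m} ((−s)^k/k!) dᵏ/dsᵏ L_I(s)]_{s = m z}` with `L_I(s) = E[e^{-sI}]`. -/
theorem coverage_gamma_fading {Ω : Type*} [MeasurableSpace Ω] (μ : Measure Ω)
    [IsProbabilityMeasure μ] (h I : Ω → ℝ) (hh : Measurable h) (hI : Measurable I)
    (hI0 : ∀ ω, 0 ≤ I ω) (hindep : IndepFun h I μ) (m : ℕ) (hm : 1 ≤ m)
    (hccdf : ∀ x : ℝ, 0 ≤ x → (μ {ω | h ω > x}).toReal =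
      Real.exp (-(m * x)) * ∑ k ∈ Finset.range m, (m * x) ^ k / (Nat.factorial k))
    (z : ℝ) (hz : 0 < z) :
    (μ {ω | h ω > z * I ω}).toReal =
      ∑ k ∈ Finset.range m, ((-((m : ℝ) * z)) ^ k / (Nat.factorial k)) *
        iteratedDeriv k (fun s : ℝ => ∫ ω, Real.exp (-s * I ω) ∂μ) ((m : ℝ) * z) := by
  have hm0 : (0:ℝ) < (m:ℝ) := by exact_mod_cast Nat.lt_of_lt_of_le Nat.zero_lt_one hm
  have hs0 : (0:ℝ) < (m:ℝ) * z := mul_pos hm0 hz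
  rw [coverage_lhs μ h I hh hI hI0 hindep m hccdf z hz]
  have hiter : ∀ k : ℕ, iteratedDeriv k (fun s : ℝ => ∫ ω, Real.exp (-s * I ω) ∂μ)
      ((m : ℝ) * z) = ∫ ω, (-I ω) ^ k * Real.exp (-((m:ℝ)*z) * I ω) ∂μ :=
    fun k => iterDeriv μ I hI hI0 k hs0
  simp only [hiter]
  calc ∫ ω, Real.exp (-((m:ℝ) * (z * I ω))) *
        ∑ k ∈ Finset.range m, ((m:ℝ) * (z * I ω)) ^ k / (Nat.factorial k) ∂μ
      = ∫ ω, ∑ k ∈ Finset.range m, ((-((m:ℝ) * z)) ^ k / (Nat.factorial k)) *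
          ((-I ω) ^ k * Real.exp (-((m:ℝ)*z) * I ω)) ∂μ := by
        apply integral_congr_ae
        filter_upwards with ω
        rw [Finset.mul_sum]
        apply Finset.sum_congr rfl
        intro k _
        have e1 : (-((m:ℝ)*z)) ^ k * (-I ω) ^ k = ((m:ℝ)*(z*I ω)) ^ k := by
          rw [← mul_pow]; congr 1; ring
        have e2 : -((m:ℝ)*z) * I ω = -((m:ℝ)*(z*I ω)) := by ring
        calc Real.exp (-((m:ℝ) * (z * I ω))) * (((m:ℝ) * (z * I ω)) ^ k / (Nat.factorial k))
            = (((-((m:ℝ)*z)) ^ k * (-I ω) ^ k) / (Nat.factorial k)) *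
              Real.exp (-((m:ℝ) * (z * I ω))) := by rw [e1]; ring
          _ = ((-((m:ℝ)*z)) ^ k / (Nat.factorial k)) *
              ((-I ω) ^ k * Real.exp (-((m:ℝ)*z) * I ω)) := by rw [e2]; ring
    _ = ∑ k ∈ Finset.range m, ∫ ω, ((-((m:ℝ) * z)) ^ k / (Nat.factorial k)) *
          ((-I ω) ^ k * Real.exp (-((m:ℝ)*z) * I ω)) ∂μ :=
        integral_finset_sum _ fun k _ => ((intg μ I hI hI0 k hs0).const_mul _)
    _ = ∑ k ∈ Finset.range m, ((-((m:ℝ) * z)) ^ k / (Nat.factorial k)) *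
          ∫ ω, (-I ω) ^ k * Real.exp (-((m:ℝ)*z) * I ω) ∂μ := by
        apply Finset.sum_congr rfl
        intro k _
        exact integral_const_mul _ _
end

section
/- For θ > 0, α > 2, and λ > 0, the all-NLOS closest-BS coverage probability satisfies P_cov^NLOS(θ) = ∫_0^∞ exp(−πλr²(1 + ρ(θ,α))) 2πλ r dr = 1/(1 + ρ(θ,α)), where ρ(θ,α) = θ^{2/α} ∫_{θ^{−2/α}}^∞ 1/(1+u^{α/2}) du; in particular it is independent of λ. -/
open Real MeasureTheory

lemma gauss_aux (c b : ℝ) (hc : 0 < c) (hb : 0 < b) :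
    ∫ r in Set.Ioi (0:ℝ), Real.exp (-(c * r ^ 2)) * (b * r) = b / (2 * c) := by
  have hderiv : ∀ x ∈ Set.Ioi (0:ℝ),
      HasDerivAt (fun r : ℝ => -(b / (2 * c)) * Real.exp (-(c * r ^ 2)))
        (Real.exp (-(c * x ^ 2)) * (b * x)) x := by
    intro x _
    have h1 : HasDerivAt (fun r : ℝ => -(c * r ^ 2)) (-(c * (2 * x))) x := by
      refine ((hasDerivAt_pow 2 x).const_mul c).neg.congr_deriv ?_
      simp
    have h2 := (h1.exp).const_mul (-(b / (2 * c)))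
    refine h2.congr_deriv ?_
    field_simp
  have hpos : ∀ x ∈ Set.Ioi (0:ℝ), 0 ≤ Real.exp (-(c * x ^ 2)) * (b * x) := by
    intro x hx
    have hx' : (0:ℝ) < x := hx
    positivity
  have htop : Filter.Tendsto (fun r : ℝ => -(c * r ^ 2)) Filter.atTop Filter.atBot := by
    apply Filter.tendsto_neg_atBot_iff.mpr
    exact (Filter.tendsto_pow_atTop two_ne_zero).const_mul_atTop hc
  have htend : Filter.Tendsto (fun r : ℝ => -(b / (2 * c)) * Real.exp (-(c * r ^ 2)))
      Filter.atTop (nhds 0) := by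
    have := (Real.tendsto_exp_atBot.comp htop).const_mul (-(b / (2 * c)))
    simpa using this
  have hcont : ContinuousWithinAt (fun r : ℝ => -(b / (2 * c)) * Real.exp (-(c * r ^ 2)))
      (Set.Ici 0) 0 := Continuous.continuousWithinAt (by continuity)
  have := integral_Ioi_of_hasDerivAt_of_nonneg hcont hderiv hpos htend
  rw [this]
  simp

lemma inner_aux (θ α r : ℝ) (hθ : 0 < θ) (hα : 2 < α) (hr : 0 < r) :
    (∫ t in Set.Ioi r, (1 - 1 / (1 + θ * r ^ α * t ^ (-α))) * t)
      = r ^ 2 * (θ ^ (2 / α) * ∫ u in Set.Ioi (θ ^ (-(2 / α))), 1 / (1 + u ^ (α / 2))) / 2 := by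
  have hα0 : (0:ℝ) < α := by linarith
  set a : ℝ := θ ^ (-(2 / α)) with ha_def
  have ha : 0 < a := rpow_pos_of_pos hθ _
  set c : ℝ := r * θ ^ (1 / α) with hc_def
  have hc : 0 < c := mul_pos hr (rpow_pos_of_pos hθ _)
  set g : ℝ → ℝ := fun u => c * u ^ ((1:ℝ)/2) with hg_def
  set g' : ℝ → ℝ := fun u => c * ((1/2) * u ^ ((1:ℝ)/2 - 1)) with hg'_def
  have hderiv : ∀ u ∈ Set.Ioi a, HasDerivWithinAt g (g' u) (Set.Ioi a) u := by
    intro u hu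
    have hu0 : u ≠ 0 := (lt_trans ha hu).ne'
    exact (((Real.hasDerivAt_rpow_const (Or.inl hu0)).const_mul c)).hasDerivWithinAt
  have hmono : StrictMonoOn g (Set.Ioi a) := by
    intro u hu v hv huv
    have : u ^ ((1:ℝ)/2) < v ^ ((1:ℝ)/2) :=
      Real.rpow_lt_rpow (le_of_lt (lt_trans ha hu)) huv (by norm_num)
    exact mul_lt_mul_of_pos_left this hc
  have hθθ : θ ^ (-(2/α)) * θ ^ (2/α) = 1 := by
    rw [← Real.rpow_add hθ]; norm_num
  have himg : g '' Set.Ioi a = Set.Ioi r := by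
    ext t
    simp only [Set.mem_image, Set.mem_Ioi]
    constructor
    · rintro ⟨u, hu, rfl⟩
      have h1 : a ^ ((1:ℝ)/2) < u ^ ((1:ℝ)/2) :=
        Real.rpow_lt_rpow ha.le hu (by norm_num)
      have h2 : a ^ ((1:ℝ)/2) = θ ^ (-(1 / α)) := by
        rw [ha_def, ← Real.rpow_mul hθ.le]
        norm_num
      have h3 : c * a ^ ((1:ℝ)/2) = r := by
        rw [h2, hc_def, mul_assoc, ← Real.rpow_add hθ]
        simp
      calc r = c * a ^ ((1:ℝ)/2) := h3.symm
        _ < c * u ^ ((1:ℝ)/2) := mul_lt_mul_of_pos_left h1 hc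
    · intro ht
      have htpos : 0 < t := lt_trans hr ht
      refine ⟨t ^ 2 / c ^ 2, ?_, ?_⟩
      · have hr2 : r ^ 2 < t ^ 2 := by nlinarith
        have hac : a * c ^ 2 = r ^ 2 := by
          rw [ha_def, hc_def, mul_pow, ← Real.rpow_natCast (θ ^ (1/α)) 2,
            ← Real.rpow_mul hθ.le]
          push_cast
          rw [show 1/α * 2 = 2/α by ring]
          nlinarith [hθθ]
        rw [lt_div_iff₀ (by positivity)]
        nlinarith
      · have h5 : (t ^ 2 / c ^ 2) ^ ((1:ℝ)/2) = t / c := by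
          rw [show t ^ 2 / c ^ 2 = (t/c)^2 by ring, ← Real.rpow_natCast (t/c) 2,
            ← Real.rpow_mul (by positivity : (0:ℝ) ≤ t/c)]
          norm_num
        rw [hg_def]
        simp only
        rw [h5, mul_div_cancel₀ _ hc.ne']
  rw [← himg, integral_image_eq_integral_abs_deriv_smul measurableSet_Ioi hderiv hmono.injOn]
  have hptwise : ∀ u ∈ Set.Ioi a,
      |g' u| • ((1 - 1 / (1 + θ * r ^ α * (g u) ^ (-α))) * (g u))
        = (r ^ 2 * θ ^ (2 / α) / 2) * (1 / (1 + u ^ (α / 2))) := by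
    intro u hu
    have hu0 : 0 < u := lt_trans ha hu
    have hval : 0 < u ^ (α/2) := rpow_pos_of_pos hu0 _
    have hkey : θ * r ^ α * (g u) ^ (-α) = (u ^ (α/2))⁻¹ := by
      rw [hg_def]
      simp only
      rw [hc_def, mul_assoc r _ _, Real.mul_rpow hr.le (by positivity),
        Real.mul_rpow (by positivity) (by positivity),
        ← Real.rpow_mul hθ.le, ← Real.rpow_mul hu0.le]
      have e1 : θ ^ (1/α * -α) = θ⁻¹ := by
        rw [show 1/α * -α = -1 by field_simp, Real.rpow_neg_one]
      have e2 : r ^ α * r ^ (-α) = 1 := by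
        rw [← Real.rpow_add hr]; simp
      have e3 : u ^ ((1:ℝ)/2 * -α) = (u ^ (α/2))⁻¹ := by
        rw [show (1:ℝ)/2 * -α = -(α/2) by ring, Real.rpow_neg hu0.le]
      rw [e1, e3, show θ * r ^ α * (r ^ (-α) * (θ⁻¹ * (u ^ (α/2))⁻¹))
        = (r ^ α * r ^ (-α)) * (θ * θ⁻¹) * (u ^ (α/2))⁻¹ by ring, e2,
        mul_inv_cancel₀ hθ.ne']
      ring
    have habs : |g' u| = c * ((1/2) * u ^ (-(1:ℝ)/2)) := by
      rw [hg'_def]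
      simp only
      rw [abs_of_pos (by positivity)]
      norm_num
    have hgu : g u = c * u ^ ((1:ℝ)/2) := rfl
    have huu : u ^ (-(1:ℝ)/2) * u ^ ((1:ℝ)/2) = 1 := by
      rw [← Real.rpow_add hu0]
      norm_num
    have hc2 : c ^ 2 = r ^ 2 * θ ^ (2/α) := by
      rw [hc_def, mul_pow, ← Real.rpow_natCast (θ ^ (1/α)) 2, ← Real.rpow_mul hθ.le]
      push_cast
      rw [show 1/α * 2 = 2/α by ring]
    have hfrac : 1 - 1 / (1 + (u ^ (α/2))⁻¹) = 1 / (1 + u ^ (α/2)) := by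
      rw [inv_eq_one_div]
      have h1 : (1:ℝ) + 1 / u ^ (α/2) ≠ 0 := by positivity
      have h2 : (1:ℝ) + u ^ (α/2) ≠ 0 := by positivity
      field_simp
      ring
    rw [smul_eq_mul, habs, hkey, hgu, hfrac,
      show c * (1/2 * u ^ (-(1:ℝ)/2)) * (1 / (1 + u ^ (α/2)) * (c * u ^ ((1:ℝ)/2)))
        = (c^2 * (u ^ (-(1:ℝ)/2) * u ^ ((1:ℝ)/2))) / 2 * (1 / (1 + u ^ (α/2))) by ring,
      huu, hc2]
    ring
  rw [setIntegral_congr_fun measurableSet_Ioi hptwise, integral_const_mul]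
  ring

/-- All-NLOS closest-BS coverage probability: for `θ > 0`, `α > 2`, `λ > 0`,
`P_cov^NLOS(θ) = ∫_0^∞ exp(−πλr²(1+ρ(θ,α))) 2πλ r dr = 1/(1 + ρ(θ,α))`, where
`ρ(θ,α) = θ^{2/α} ∫_{θ^{−2/α}}^∞ du/(1+u^{α/2})`; in particular it does not
depend on `λ`. -/
theorem nlos_coverage_invariant (θ α lam : ℝ) (hθ : 0 < θ) (hα : 2 < α)
    (hlam : 0 < lam) :
    (∫ r in Set.Ioi (0:ℝ),
        Real.exp (-(2 * Real.pi * lam) *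
            ∫ t in Set.Ioi r, (1 - 1 / (1 + θ * r ^ α * t ^ (-α))) * t) *
          (2 * Real.pi * lam * Real.exp (-(Real.pi * lam * r ^ 2)) * r) =
      ∫ r in Set.Ioi (0:ℝ),
        Real.exp (-(Real.pi * lam * r ^ 2 *
            (1 + θ ^ (2 / α) * ∫ u in Set.Ioi (θ ^ (-(2 / α))), 1 / (1 + u ^ (α / 2))))) *
          (2 * Real.pi * lam * r)) ∧
    (∫ r in Set.Ioi (0:ℝ),
        Real.exp (-(Real.pi * lam * r ^ 2 *
            (1 + θ ^ (2 / α) * ∫ u in Set.Ioi (θ ^ (-(2 / α))), 1 / (1 + u ^ (α / 2))))) *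
          (2 * Real.pi * lam * r)) =
      1 / (1 + θ ^ (2 / α) * ∫ u in Set.Ioi (θ ^ (-(2 / α))), 1 / (1 + u ^ (α / 2))) := by
  set ρ : ℝ := θ ^ (2 / α) * ∫ u in Set.Ioi (θ ^ (-(2 / α))), 1 / (1 + u ^ (α / 2)) with hρ_def
  have hρ0 : 0 ≤ ρ := by
    apply mul_nonneg (rpow_nonneg hθ.le _)
    apply setIntegral_nonneg measurableSet_Ioi
    intro u hu
    have hu0 : 0 < u := lt_trans (rpow_pos_of_pos hθ _) hu
    positivity
  have h1ρ : (0:ℝ) < 1 + ρ := by linarith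
  constructor
  · apply setIntegral_congr_fun measurableSet_Ioi
    intro r hr
    have hr0 : (0:ℝ) < r := hr
    dsimp only
    rw [inner_aux θ α r hθ hα hr0, ← hρ_def]
    rw [show -(Real.pi * lam * r ^ 2 * (1 + ρ))
        = -(2 * Real.pi * lam) * (r ^ 2 * ρ / 2) + -(Real.pi * lam * r ^ 2) by ring,
      Real.exp_add]
    ring
  · have hc : (0:ℝ) < Real.pi * lam * (1 + ρ) :=
      mul_pos (mul_pos Real.pi_pos hlam) h1ρ
    have hb : (0:ℝ) < 2 * Real.pi * lam := by positivity
    have := gauss_aux (Real.pi * lam * (1 + ρ)) (2 * Real.pi * lam) hc hb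
    rw [show (fun r : ℝ => Real.exp (-(Real.pi * lam * r ^ 2 * (1 + ρ))) * (2 * Real.pi * lam * r))
        = (fun r : ℝ => Real.exp (-((Real.pi * lam * (1 + ρ)) * r ^ 2)) * (2 * Real.pi * lam * r))
        from funext fun r => by rw [show Real.pi * lam * r ^ 2 * (1 + ρ)
          = (Real.pi * lam * (1 + ρ)) * r ^ 2 by ring]]
    rw [this]
    rw [div_eq_div_iff (by positivity) h1ρ.ne']
    ring
end
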